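/- Let S be an ordered forest and I a finite linear order, n = ht(S). Then S ⊗ I = {(s,t) ∈ S × I^{≤n} : ht(s) = |t|}, with the relation (s₁,t₁) ⊑ (s₂,t₂) iff s₁ ⊑_S s₂, t₁↾(ht(s₁)−1) = t₂↾(ht(s₁)−1), and t₁(ht(s₁)−1) ≤_I t₂(ht(s₁)−1), is a forest (predecessor sets are chains); and the order comparing the interleaved sequences (s(0),t(0),…,s(h−1),t(h−1)) lexicographically makes S ⊗ I an ordered forest. -/

import Mathlib

set_option linter.unusedSectionVars false


/-- An ordered forest: a finite poset (`tle`, the forest order `⊑`) with linearly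
ordered predecessor sets, together with a linear order `lin` (the lexicographic
order `≤`) extending the forest order and coherent with the forest structure. -/
structure OForest (α : Type) [Finite α] where
  tle : α → α → Prop
  tle_refl : ∀ v, tle v v
  tle_trans : ∀ u v w, tle u v → tle v w → tle u w
  tle_antisymm : ∀ v w, tle v w → tle w v → v = w
  pred_chain : ∀ v x y, tle x v → tle y v → tle x y ∨ tle y x
  lin : α → α → Prop
  lin_refl : ∀ v, lin v v
  lin_trans : ∀ u v w, lin u v → lin v w → lin u w
  lin_antisymm : ∀ v w, lin v w → lin w v → v = w
  lin_total : ∀ v w, lin v w ∨ lin w v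
  tle_lin : ∀ v w, tle v w → lin v w
  lex_coh : ∀ v w v' w', tle v v' → tle w w' → ¬ tle v w → ¬ tle w v → (lin v' w' ↔ lin v w)

variable {α : Type} [Finite α]

/-- The height `ht(s)`: the number of `⊑`-predecessors of `s` (including `s`). -/
noncomputable def htF (S : OForest α) (s : α) : ℕ := Nat.card {x // S.tle x s}

/-- The carrier of `S ⊗ I`: pairs `(s, t)` with `t` a sequence from `I` of length `ht(s)`. -/
def TCar (S : OForest α) (I : Type) : Type := Σ s : α, Fin (htF S s) → I

instance {S : OForest α} {I : Type} [Finite I] : Finite (TCar S I) := by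
  unfold TCar; infer_instance

/-- The forest relation on `S ⊗ I`. -/
def tensorTle (S : OForest α) {I : Type} [LinearOrder I] (p q : TCar S I) : Prop :=
  S.tle p.1 q.1 ∧
  (∀ (k : Fin (htF S p.1)) (k' : Fin (htF S q.1)),
    (k : ℕ) = (k' : ℕ) → (k : ℕ) < htF S p.1 - 1 → p.2 k = q.2 k') ∧
  (∀ (k : Fin (htF S p.1)) (k' : Fin (htF S q.1)),
    (k : ℕ) = htF S p.1 - 1 → (k' : ℕ) = htF S p.1 - 1 → p.2 k ≤ q.2 k')

/-- The strict comparison used to compare interleaved sequences letterwise. -/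
def sumRel (S : OForest α) (I : Type) [LinearOrder I] : (α ⊕ I) → (α ⊕ I) → Prop
  | Sum.inl a, Sum.inl b => S.lin a b ∧ a ≠ b
  | Sum.inr a, Sum.inr b => a < b
  | _, _ => False

/-- The interleaved sequence `(s(0), t(0), …, s(h-1), t(h-1))` of `(s, t) ∈ S ⊗ I`,
where `pred s i` is the predecessor `s(i)` of `s` of height `i + 1`. -/
noncomputable def interleave (S : OForest α) {I : Type} (pred : α → ℕ → α)
    (p : TCar S I) : List (α ⊕ I) :=
  (List.finRange (htF S p.1)).flatMap fun k => [Sum.inl (pred p.1 k.1), Sum.inr (p.2 k)]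

/-- The lexicographic order on `S ⊗ I`. -/
noncomputable def tensorLin (S : OForest α) {I : Type} [LinearOrder I]
    (pred : α → ℕ → α) (p q : TCar S I) : Prop :=
  p = q ∨ List.Lex (sumRel S I) (interleave S pred p) (interleave S pred q)


section ListLex
variable {σ : Type*} {r : σ → σ → Prop}

theorem lexTrans (hr : ∀ a b c, r a b → r b c → r a c) :
    ∀ {l₁ l₂ l₃ : List σ}, List.Lex r l₁ l₂ → List.Lex r l₂ l₃ → List.Lex r l₁ l₃ := by
  intro l₁ l₂ l₃ h₁
  induction h₁ generalizing l₃ with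
  | nil => intro h₂; cases h₂ <;> exact List.Lex.nil
  | @cons a t₁ t₂ h ih =>
    intro h₂
    cases h₂ with
    | cons h' => exact List.Lex.cons (ih h')
    | rel h' => exact List.Lex.rel h'
  | @rel a₁ t₁ a₂ t₂ h =>
    intro h₂
    cases h₂ with
    | cons h' => exact List.Lex.rel h
    | rel h' => exact List.Lex.rel (hr _ _ _ h h')

theorem lexAsymm (hr : ∀ a b, r a b → r b a → False) :
    ∀ {l₁ l₂ : List σ}, List.Lex r l₁ l₂ → List.Lex r l₂ l₁ → False := by
  intro l₁ l₂ h₁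
  induction h₁ with
  | nil => intro h₂; cases h₂
  | cons h ih => intro h₂; cases h₂ with
    | cons h' => exact ih h'
    | rel h' => exact hr _ _ h' h'
  | rel h => intro h₂; cases h₂ with
    | cons h' => exact hr _ _ h h
    | rel h' => exact hr _ _ h h'

theorem lexTotal : ∀ (l₁ l₂ : List σ),
    (∀ (i : ℕ) (a b : σ), l₁[i]? = some a → l₂[i]? = some b → a = b ∨ r a b ∨ r b a) →
    List.Lex r l₁ l₂ ∨ l₁ = l₂ ∨ List.Lex r l₂ l₁
  | [], [], _ => Or.inr (Or.inl rfl)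
  | [], _ :: _, _ => Or.inl List.Lex.nil
  | _ :: _, [], _ => Or.inr (Or.inr List.Lex.nil)
  | a :: l₁, b :: l₂, h => by
    rcases h 0 a b (by simp) (by simp) with rfl | hab | hba
    · rcases lexTotal l₁ l₂ (fun i x y hx hy => h (i + 1) x y (by simpa) (by simpa)) with
        h' | h' | h'
      · exact Or.inl (List.Lex.cons h')
      · exact Or.inr (Or.inl (by rw [h']))
      · exact Or.inr (Or.inr (List.Lex.cons h'))
    · exact Or.inl (List.Lex.rel hab)
    · exact Or.inr (Or.inr (List.Lex.rel hba))

theorem lex_of_agree_of_rel : ∀ {l₁ l₂ : List σ} {i : ℕ} {x y : σ},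
    (∀ j, j < i → l₁[j]? = l₂[j]?) →
    l₁[i]? = some x → l₂[i]? = some y → r x y → List.Lex r l₁ l₂ := by
  intro l₁ l₂ i
  induction i generalizing l₁ l₂ with
  | zero =>
    intro x y _ hx hy hxy
    cases l₁ with
    | nil => simp at hx
    | cons a t₁ =>
      cases l₂ with
      | nil => simp at hy
      | cons b t₂ =>
        simp at hx hy
        subst hx; subst hy
        exact List.Lex.rel hxy
  | succ i ih =>
    intro x y hag hx hy hxy
    cases l₁ with
    | nil => simp at hx
    | cons a t₁ =>
      cases l₂ with
      | nil => simp at hy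
      | cons b t₂ =>
        have h0 := hag 0 (Nat.succ_pos _)
        simp at h0
        subst h0
        exact List.Lex.cons (ih (fun j hj => by simpa using hag (j + 1) (by omega))
          (by simpa using hx) (by simpa using hy) hxy)

theorem lex_of_agree_of_lt_length : ∀ {l₁ l₂ : List σ},
    (∀ j, j < l₁.length → l₁[j]? = l₂[j]?) → l₁.length < l₂.length → List.Lex r l₁ l₂ := by
  intro l₁
  induction l₁ with
  | nil =>
    intro l₂ _ hlen
    cases l₂ with
    | nil => simp at hlen
    | cons b t => exact List.Lex.nil
  | cons a t ih =>
    intro l₂ hag hlen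
    cases l₂ with
    | nil => simp at hlen
    | cons b t₂ =>
      have h0 := hag 0 (by simp)
      simp at h0
      subst h0
      exact List.Lex.cons (ih (fun j hj => by simpa using hag (j + 1) (by simpa using hj))
        (by simpa using hlen))

theorem pair_flatMap_length (n : ℕ) (f g : ℕ → σ) :
    ((List.range n).flatMap fun k => [f k, g k]).length = 2 * n := by
  induction n with
  | zero => simp
  | succ n ih => rw [List.range_succ, List.flatMap_append]; simp [ih]; omega

theorem pair_flatMap_getElem? (n : ℕ) (f g : ℕ → σ) (i : ℕ) :
    ((List.range n).flatMap fun k => [f k, g k])[i]? =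
      if i < 2 * n then some (if i % 2 = 0 then f (i / 2) else g (i / 2)) else none := by
  induction n with
  | zero => simp
  | succ n ih =>
    rw [List.range_succ, List.flatMap_append]
    have hl := pair_flatMap_length n f g
    by_cases h : i < 2 * n
    · rw [List.getElem?_append_left (by rw [hl]; exact h), ih]
      simp only [h, if_true, (by omega : i < 2 * (n + 1)), if_true]
    · rw [List.getElem?_append_right (by rw [hl]; omega), hl]
      simp only [List.flatMap_cons, List.flatMap_nil, List.append_nil]
      rcases (show i - 2 * n = 0 ∨ i - 2 * n = 1 ∨ 2 ≤ i - 2 * n by omega) with h0 | h1 | h2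
      · rw [h0]
        have e1 : i < 2 * (n + 1) := by omega
        have e2 : i % 2 = 0 := by omega
        have e3 : i / 2 = n := by omega
        simp [e1, e2, e3]
      · rw [h1]
        have e1 : i < 2 * (n + 1) := by omega
        have e2 : ¬ i % 2 = 0 := by omega
        have e3 : i / 2 = n := by omega
        simp [e1, e2, e3]
      · have : ¬ i < 2 * (n + 1) := by omega
        rw [if_neg this]
        apply List.getElem?_eq_none
        simp; omega

end ListLex
section Forest

variable {α : Type} [Finite α] {S : OForest α} {I : Type} [LinearOrder I]
variable {pred : α → ℕ → α}

theorem htF_pos (S : OForest α) (s : α) : 0 < htF S s := by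
  have : Nonempty {x // S.tle x s} := ⟨⟨s, S.tle_refl s⟩⟩
  exact Nat.card_pos

theorem htF_mono (S : OForest α) {a b : α} (h : S.tle a b) : htF S a ≤ htF S b :=
  Nat.card_le_card_of_injective (fun x => ⟨x.1, S.tle_trans _ _ _ x.2 h⟩)
    (fun x y hxy => Subtype.ext (by simpa using congrArg Subtype.val hxy))

theorem tle_of_ht_eq {a b : α} (h : S.tle a b) (he : htF S a = htF S b) : a = b := by
  set f : {x // S.tle x a} → {x // S.tle x b} := fun x => ⟨x.1, S.tle_trans _ _ _ x.2 h⟩ with hf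
  have hinj : Function.Injective f := fun x y hxy =>
    Subtype.ext (by simpa [hf] using congrArg Subtype.val hxy)
  have hbij : Function.Bijective f := (Nat.bijective_iff_injective_and_card f).2 ⟨hinj, he⟩
  obtain ⟨x, hx⟩ := hbij.2 ⟨b, S.tle_refl b⟩
  have hba : S.tle b a := by
    have h1 := congrArg Subtype.val hx
    simp only [hf] at h1
    rw [← h1]
    exact x.2
  exact S.tle_antisymm _ _ h hba

theorem pred_unique {a x y : α} (hx : S.tle x a) (hy : S.tle y a)
    (he : htF S x = htF S y) : x = y := by
  rcases S.pred_chain a x y hx hy with h | h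
  · exact tle_of_ht_eq h he
  · exact (tle_of_ht_eq h he.symm).symm

theorem interleave_eq (p : TCar S I) :
    interleave S pred p = (List.range (htF S p.1)).flatMap fun k =>
      [Sum.inl (pred p.1 k),
       Sum.inr (if h : k < htF S p.1 then p.2 ⟨k, h⟩ else p.2 ⟨0, htF_pos S p.1⟩)] := by
  rw [interleave, ← List.map_coe_finRange_eq_range, List.flatMap_map]
  congr 1
  funext k
  simp [Function.comp, dif_pos k.2]

theorem il_len (p : TCar S I) : (interleave S pred p).length = 2 * htF S p.1 := by
  rw [interleave_eq, pair_flatMap_length]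

theorem il_get (p : TCar S I) (i : ℕ) :
    (interleave S pred p)[i]? =
      if i < 2 * htF S p.1 then
        some (if i % 2 = 0 then Sum.inl (pred p.1 (i / 2))
          else Sum.inr (if h : i / 2 < htF S p.1 then p.2 ⟨i / 2, h⟩ else p.2 ⟨0, htF_pos S p.1⟩))
      else none := by
  rw [interleave_eq, pair_flatMap_getElem?]

theorem il_get_even (p : TCar S I) {k : ℕ} (hk : k < htF S p.1) :
    (interleave S pred p)[2 * k]? = some (Sum.inl (pred p.1 k)) := by
  rw [il_get]
  have e1 : 2 * k < 2 * htF S p.1 := by omega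
  have e2 : 2 * k % 2 = 0 := by omega
  have e3 : 2 * k / 2 = k := by omega
  simp [e1, e2, e3]

theorem il_get_odd (p : TCar S I) {k : ℕ} (hk : k < htF S p.1) :
    (interleave S pred p)[2 * k + 1]? = some (Sum.inr (p.2 ⟨k, hk⟩)) := by
  rw [il_get]
  have e1 : 2 * k + 1 < 2 * htF S p.1 := by omega
  have e2 : ¬ (2 * k + 1) % 2 = 0 := by omega
  have e3 : (2 * k + 1) / 2 = k := by omega
  simp [e1, e2, e3, hk]

theorem il_none (p : TCar S I) {i : ℕ} (hi : 2 * htF S p.1 ≤ i) :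
    (interleave S pred p)[i]? = none :=
  List.getElem?_eq_none (by rw [il_len]; exact hi)

theorem il_entry (p : TCar S I) (j : ℕ) (x : α ⊕ I)
    (hx : (interleave S pred p)[j]? = some x) :
    j < 2 * htF S p.1 ∧
      ((j % 2 = 0 ∧ x = Sum.inl (pred p.1 (j / 2))) ∨
       (j % 2 = 1 ∧ ∃ hj : j / 2 < htF S p.1, x = Sum.inr (p.2 ⟨j / 2, hj⟩))) := by
  have hlt : j < 2 * htF S p.1 := by
    by_contra h
    rw [il_none p (by omega)] at hx
    simp at hx
  refine ⟨hlt, ?_⟩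
  rcases Nat.even_or_odd j with ⟨k, hk⟩ | ⟨k, hk⟩
  · left
    have hkh : j / 2 < htF S p.1 := by omega
    rw [show j = 2 * (j / 2) by omega, il_get_even p hkh] at hx
    exact ⟨by omega, (Option.some.inj hx).symm⟩
  · right
    have hkh : j / 2 < htF S p.1 := by omega
    rw [show j = 2 * (j / 2) + 1 by omega, il_get_odd p hkh] at hx
    exact ⟨by omega, hkh, (Option.some.inj hx).symm⟩

section withPred

variable (hpred : ∀ s k, k < htF S s → S.tle (pred s k) s ∧ htF S (pred s k) = k + 1)
variable (hpred_self : ∀ s, pred s (htF S s - 1) = s)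

include hpred in
theorem pred_eq_of_tle {a b : α} (h : S.tle a b) {k : ℕ} (hk : k < htF S a) :
    pred b k = pred a k :=
  pred_unique (hpred b k (lt_of_lt_of_le hk (htF_mono S h))).1
    (S.tle_trans _ _ _ (hpred a k hk).1 h)
    (by rw [(hpred b k (lt_of_lt_of_le hk (htF_mono S h))).2, (hpred a k hk).2])

include hpred_self in
theorem il_inj (p q : TCar S I) (h : interleave S pred p = interleave S pred q) :
    p = q := by
  have hlen := congrArg List.length h
  rw [il_len, il_len] at hlen
  obtain ⟨s, t⟩ := p
  obtain ⟨s', t'⟩ := q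
  have hs0 : 0 < htF S s := htF_pos S s
  have hs0' : 0 < htF S s' := htF_pos S s'
  have hht : htF S s = htF S s' := by
    have h' : 2 * htF S s = 2 * htF S s' := hlen
    omega
  have hs : s = s' := by
    have h1 := congrArg (fun l => l[2 * (htF S s - 1)]?) h
    rw [il_get_even (p := (⟨s, t⟩ : TCar S I)) (show htF S s - 1 < htF S s by omega),
        il_get_even (p := (⟨s', t'⟩ : TCar S I)) (show htF S s - 1 < htF S s' by omega)] at h1
    have h2 := Sum.inl.inj (Option.some.inj h1)
    rw [hpred_self s] at h2
    rw [h2, show htF S s - 1 = htF S s' - 1 by omega, hpred_self s']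
  subst hs
  have ht : t = t' := by
    funext k
    have h1 := congrArg (fun l => l[2 * (k : ℕ) + 1]?) h
    rw [il_get_odd (p := (⟨s, t⟩ : TCar S I)) (k := (k : ℕ)) k.2,
        il_get_odd (p := (⟨s, t'⟩ : TCar S I)) (k := (k : ℕ)) k.2] at h1
    have h2 := Sum.inr.inj (Option.some.inj h1)
    simpa using h2
  rw [ht]

end withPred
end Forest
section Tensor

variable {α : Type} [Finite α] {S : OForest α} {I : Type} [LinearOrder I]
variable {pred : α → ℕ → α}
variable (hpred : ∀ s k, k < htF S s → S.tle (pred s k) s ∧ htF S (pred s k) = k + 1)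
variable (hpred_self : ∀ s, pred s (htF S s - 1) = s)

theorem sumRel_asymm {x y : α ⊕ I} (h1 : sumRel S I x y) (h2 : sumRel S I y x) : False := by
  cases x <;> cases y <;> simp [sumRel] at h1 h2
  · exact h1.2 (S.lin_antisymm _ _ h1.1 h2.1)
  · exact absurd h2 (lt_asymm h1)

theorem sumRel_trans {x y z : α ⊕ I} (h1 : sumRel S I x y) (h2 : sumRel S I y z) :
    sumRel S I x z := by
  cases x <;> cases y <;> cases z <;> simp [sumRel] at h1 h2 ⊢
  · refine ⟨S.lin_trans _ _ _ h1.1 h2.1, ?_⟩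
    rintro rfl
    exact h1.2 (S.lin_antisymm _ _ h1.1 h2.1)
  · exact lt_trans h1 h2

include hpred in
theorem tle_agree {p q : TCar S I} (h : tensorTle S p q) :
    htF S p.1 ≤ htF S q.1 ∧
    (∀ j, j < 2 * htF S p.1 - 1 → (interleave S pred q)[j]? = (interleave S pred p)[j]?) ∧
    ∃ a b : I, (interleave S pred p)[2 * htF S p.1 - 1]? = some (Sum.inr a) ∧
      (interleave S pred q)[2 * htF S p.1 - 1]? = some (Sum.inr b) ∧ a ≤ b := by
  obtain ⟨h1, h2, h3⟩ := h
  have hm := htF_mono S h1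
  have hp1 := htF_pos S p.1
  refine ⟨hm, ?_, ?_⟩
  · intro j hj
    rcases Nat.even_or_odd j with ⟨k, hk⟩ | ⟨k, hk⟩
    · have hkp : j / 2 < htF S p.1 := by omega
      rw [show j = 2 * (j / 2) by omega, il_get_even q (by omega), il_get_even p hkp,
        pred_eq_of_tle hpred h1 hkp]
    · have hkp : j / 2 < htF S p.1 - 1 := by omega
      rw [show j = 2 * (j / 2) + 1 by omega, il_get_odd q (by omega), il_get_odd p (by omega)]
      exact congrArg some (congrArg Sum.inr (h2 ⟨j / 2, by omega⟩ ⟨j / 2, by omega⟩ rfl hkp)).symm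
  · refine ⟨p.2 ⟨htF S p.1 - 1, by omega⟩, q.2 ⟨htF S p.1 - 1, by omega⟩, ?_, ?_, ?_⟩
    · rw [show 2 * htF S p.1 - 1 = 2 * (htF S p.1 - 1) + 1 by omega,
        il_get_odd p (show htF S p.1 - 1 < htF S p.1 by omega)]
    · rw [show 2 * htF S p.1 - 1 = 2 * (htF S p.1 - 1) + 1 by omega,
        il_get_odd q (show htF S p.1 - 1 < htF S q.1 by omega)]
    · exact h3 _ _ rfl rfl

include hpred hpred_self in
theorem tle_of_agree {p q : TCar S I}
    (hht : htF S p.1 ≤ htF S q.1)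
    (hag : ∀ j, j < 2 * htF S p.1 - 1 →
      (interleave S pred p)[j]? = (interleave S pred q)[j]?)
    (hle : ∀ a b : I, (interleave S pred p)[2 * htF S p.1 - 1]? = some (Sum.inr a) →
      (interleave S pred q)[2 * htF S p.1 - 1]? = some (Sum.inr b) → a ≤ b) :
    tensorTle S p q := by
  have hp1 := htF_pos S p.1
  have htle : S.tle p.1 q.1 := by
    have h0 := hag (2 * (htF S p.1 - 1)) (by omega)
    rw [il_get_even p (show htF S p.1 - 1 < htF S p.1 by omega),
        il_get_even q (show htF S p.1 - 1 < htF S q.1 by omega)] at h0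
    have h2 := Sum.inl.inj (Option.some.inj h0)
    rw [hpred_self p.1] at h2
    rw [h2]
    exact (hpred q.1 (htF S p.1 - 1) (by omega)).1
  refine ⟨htle, ?_, ?_⟩
  · intro k k' hkk hklt
    have h0 := hag (2 * (k : ℕ) + 1) (by omega)
    rw [il_get_odd p k.2, il_get_odd q (show (k : ℕ) < htF S q.1 by omega)] at h0
    have h2 := Sum.inr.inj (Option.some.inj h0)
    have ek : (⟨(k : ℕ), k.2⟩ : Fin (htF S p.1)) = k := rfl
    have ek' : (⟨(k : ℕ), show (k : ℕ) < htF S q.1 by omega⟩ : Fin (htF S q.1)) = k' :=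
      Fin.ext hkk
    rw [ek, ek'] at h2
    exact h2
  · intro k k' hk hk'
    have e1 : (interleave S pred p)[2 * htF S p.1 - 1]? = some (Sum.inr (p.2 k)) := by
      rw [show 2 * htF S p.1 - 1 = 2 * (k : ℕ) + 1 by omega, il_get_odd p k.2]
    have e2 : (interleave S pred q)[2 * htF S p.1 - 1]? = some (Sum.inr (q.2 k')) := by
      rw [show 2 * htF S p.1 - 1 = 2 * (k' : ℕ) + 1 by omega, il_get_odd q k'.2]
    exact hle _ _ e1 e2

theorem tensorTle_refl (p : TCar S I) : tensorTle S p p :=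
  ⟨S.tle_refl p.1, fun k k' h _ => congrArg p.2 (Fin.ext h),
    fun k k' h h' => le_of_eq (congrArg p.2 (Fin.ext (h.trans h'.symm)))⟩

include hpred hpred_self in
theorem tensorTle_trans {p q r : TCar S I} (h1 : tensorTle S p q) (h2 : tensorTle S q r) :
    tensorTle S p r := by
  obtain ⟨hm1, hag1, a, b, ea, eb, hab⟩ := tle_agree hpred h1
  obtain ⟨hm2, hag2, b', c, eb', ec, hbc⟩ := tle_agree hpred h2
  have hp1 := htF_pos S p.1
  apply tle_of_agree hpred hpred_self (le_trans hm1 hm2)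
  · intro j hj
    exact ((hag1 j hj).symm.trans (hag2 j (by omega)).symm)
  · intro a0 c0 ha0 hc0
    have haa : a0 = a := Sum.inr.inj (Option.some.inj (ha0.symm.trans ea))
    rcases eq_or_lt_of_le hm1 with hh | hh
    · have hbb : b = b' := by
        rw [← hh] at eb'
        exact Sum.inr.inj (Option.some.inj (eb.symm.trans eb'))
      have hcc : c0 = c := by
        rw [← hh] at ec
        exact Sum.inr.inj (Option.some.inj (hc0.symm.trans ec))
      rw [haa, hcc]
      exact le_trans hab (hbb ▸ hbc)
    · have e3 : (interleave S pred r)[2 * htF S p.1 - 1]? = some (Sum.inr b) :=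
        (hag2 (2 * htF S p.1 - 1) (by omega)).trans eb
      have hcc : c0 = b := Sum.inr.inj (Option.some.inj (hc0.symm.trans e3))
      rw [haa, hcc]
      exact hab

include hpred hpred_self in
theorem tensorTle_antisymm {p q : TCar S I} (h1 : tensorTle S p q) (h2 : tensorTle S q p) :
    p = q := by
  obtain ⟨hm1, hag1, a, b, ea, eb, hab⟩ := tle_agree hpred h1
  obtain ⟨hm2, hag2, b2, a2, eb2, ea2, hba⟩ := tle_agree hpred h2
  have hp1 := htF_pos S p.1
  have hh : htF S p.1 = htF S q.1 := le_antisymm hm1 hm2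
  apply il_inj hpred_self
  apply List.ext_getElem?
  intro j
  rcases lt_trichotomy j (2 * htF S p.1 - 1) with hj | hj | hj
  · exact (hag1 j hj).symm
  · subst hj
    rw [ea, eb]
    rw [← hh] at eb2 ea2
    have : a = a2 := Sum.inr.inj (Option.some.inj (ea.symm.trans ea2))
    have hb : b = b2 := Sum.inr.inj (Option.some.inj (eb.symm.trans eb2))
    rw [le_antisymm hab (by rw [this, hb] at *; exact hba)]
  · rw [il_none p (by omega), il_none q (by omega)]

include hpred hpred_self in
theorem tensor_chain_aux {x y v : TCar S I} (hx : tensorTle S x v) (hy : tensorTle S y v)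
    (hle : htF S x.1 ≤ htF S y.1) : tensorTle S x y ∨ tensorTle S y x := by
  obtain ⟨hmx, hagx, a, av, ea, eav, haav⟩ := tle_agree hpred hx
  obtain ⟨hmy, hagy, b, bv, eb, ebv, hbbv⟩ := tle_agree hpred hy
  have hx1 := htF_pos S x.1
  have hagree : ∀ j, j < 2 * htF S x.1 - 1 →
      (interleave S pred x)[j]? = (interleave S pred y)[j]? := fun j hj =>
    (hagx j hj).symm.trans (hagy j (by omega))
  rcases eq_or_lt_of_le hle with hh | hh
  · rcases le_total a b with hab | hba
    · left
      apply tle_of_agree hpred hpred_self hle hagree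
      intro a0 b0 ha0 hb0
      have h1 : a0 = a := Sum.inr.inj (Option.some.inj (ha0.symm.trans ea))
      have h2 : b0 = b := by
        rw [hh] at hb0
        exact Sum.inr.inj (Option.some.inj (hb0.symm.trans eb))
      rw [h1, h2]; exact hab
    · right
      apply tle_of_agree hpred hpred_self (le_of_eq hh.symm)
      · intro j hj
        exact (hagree j (by omega)).symm
      · intro b0 a0 hb0 ha0
        have h1 : b0 = b := Sum.inr.inj (Option.some.inj (hb0.symm.trans eb))
        have h2 : a0 = a := by
          rw [← hh] at ha0
          exact Sum.inr.inj (Option.some.inj (ha0.symm.trans ea))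
        rw [h1, h2]; exact hba
  · left
    apply tle_of_agree hpred hpred_self hle hagree
    intro a0 b0 ha0 hb0
    have h1 : a0 = a := Sum.inr.inj (Option.some.inj (ha0.symm.trans ea))
    have e3 : (interleave S pred y)[2 * htF S x.1 - 1]? = some (Sum.inr av) :=
      (hagy (2 * htF S x.1 - 1) (by omega)).symm.trans eav
    have h2 : b0 = av := Sum.inr.inj (Option.some.inj (hb0.symm.trans e3))
    rw [h1, h2]; exact haav

include hpred hpred_self in
theorem tensor_chain {x y v : TCar S I} (hx : tensorTle S x v) (hy : tensorTle S y v) :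
    tensorTle S x y ∨ tensorTle S y x := by
  rcases le_total (htF S x.1) (htF S y.1) with h | h
  · exact tensor_chain_aux hpred hpred_self hx hy h
  · exact (tensor_chain_aux hpred hpred_self hy hx h).symm

end Tensor
section TensorLin

variable {α : Type} [Finite α] {S : OForest α} {I : Type} [LinearOrder I]
variable {pred : α → ℕ → α}
variable (hpred : ∀ s k, k < htF S s → S.tle (pred s k) s ∧ htF S (pred s k) = k + 1)
variable (hpred_self : ∀ s, pred s (htF S s - 1) = s)

include hpred hpred_self in
theorem tensor_tle_lin {p q : TCar S I} (h : tensorTle S p q) : tensorLin S pred p q := by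
  obtain ⟨hm, hag, a, b, ea, eb, hab⟩ := tle_agree hpred h
  have hp1 := htF_pos S p.1
  rcases eq_or_lt_of_le hab with heq | hlt
  · rcases eq_or_lt_of_le hm with hh | hh
    · left
      apply il_inj hpred_self
      apply List.ext_getElem?
      intro j
      rcases lt_trichotomy j (2 * htF S p.1 - 1) with hj | hj | hj
      · exact (hag j hj).symm
      · subst hj; rw [ea, eb, heq]
      · rw [il_none p (by omega), il_none q (by omega)]
    · right
      apply lex_of_agree_of_lt_length
      · intro j hj
        rw [il_len] at hj
        rcases lt_trichotomy j (2 * htF S p.1 - 1) with h1 | h1 | h1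
        · exact (hag j h1).symm
        · subst h1; rw [ea, eb, heq]
        · omega
      · rw [il_len, il_len]; omega
  · right
    exact lex_of_agree_of_rel (fun j hj => (hag j hj).symm) ea eb hlt

include hpred hpred_self in
theorem tensor_lin_total (p q : TCar S I) :
    tensorLin S pred p q ∨ tensorLin S pred q p := by
  classical
  have key : ∀ (i : ℕ) (a b : α ⊕ I), (interleave S pred p)[i]? = some a →
      (interleave S pred q)[i]? = some b → a = b ∨ sumRel S I a b ∨ sumRel S I b a := by
    intro i a b ha hb
    obtain ⟨hlta, hfa⟩ := il_entry p i a ha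
    obtain ⟨hltb, hfb⟩ := il_entry q i b hb
    rcases hfa with ⟨hea, rfl⟩ | ⟨hoa, hja, rfl⟩ <;> rcases hfb with ⟨heb, rfl⟩ | ⟨hob, hjb, rfl⟩
    · by_cases hab : pred p.1 (i / 2) = pred q.1 (i / 2)
      · exact Or.inl (by rw [hab])
      · rcases S.lin_total (pred p.1 (i / 2)) (pred q.1 (i / 2)) with h | h
        · exact Or.inr (Or.inl ⟨h, hab⟩)
        · exact Or.inr (Or.inr ⟨h, Ne.symm hab⟩)
    · omega
    · omega
    · rcases lt_trichotomy (p.2 ⟨i / 2, hja⟩) (q.2 ⟨i / 2, hjb⟩) with h | h | h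
      · exact Or.inr (Or.inl h)
      · exact Or.inl (by rw [h])
      · exact Or.inr (Or.inr h)
  rcases lexTotal (r := sumRel S I) (interleave S pred p) (interleave S pred q) key with
    h | h | h
  · exact Or.inl (Or.inr h)
  · exact Or.inl (Or.inl (il_inj hpred_self _ _ h))
  · exact Or.inr (Or.inr h)

include hpred hpred_self in
theorem tensor_coh {v w v' w' : TCar S I} (hv : tensorTle S v v') (hw : tensorTle S w w')
    (hnvw : ¬ tensorTle S v w) (hnwv : ¬ tensorTle S w v) :
    tensorLin S pred v' w' ↔ tensorLin S pred v w := by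
  classical
  have vw_ne : v ≠ w := fun h => hnvw (h ▸ tensorTle_refl v)
  have v'w'_ne : v' ≠ w' := by
    intro h
    subst h
    rcases tensor_chain hpred hpred_self hv hw with h | h
    · exact hnvw h
    · exact hnwv h
  have hv1 := htF_pos S v.1
  have hw1 := htF_pos S w.1
  have notLin : ∀ p q : TCar S I, p ≠ q →
      List.Lex (sumRel S I) (interleave S pred q) (interleave S pred p) →
      ¬ tensorLin S pred p q := by
    rintro p q hne hqp (rfl | h)
    · exact hne rfl
    · exact lexAsymm (fun _ _ h1 h2 => sumRel_asymm h1 h2) h hqp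
  -- first difference
  have hD : ∃ j : ℕ, (interleave S pred v)[j]? ≠ (interleave S pred w)[j]? := by
    by_contra hc
    push_neg at hc
    exact vw_ne (il_inj hpred_self _ _ (List.ext_getElem? hc))
  set d := Nat.find hD with hdd
  have hd : (interleave S pred v)[d]? ≠ (interleave S pred w)[d]? := Nat.find_spec hD
  have hdmin : ∀ j, j < d → (interleave S pred v)[j]? = (interleave S pred w)[j]? :=
    fun j hj => not_not.1 (Nat.find_min hD hj)
  have hdv : d < 2 * htF S v.1 := by
    by_contra hcon
    push_neg at hcon
    have hvnone : (interleave S pred v)[d]? = none := il_none v hcon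
    have hdw : d < 2 * htF S w.1 := by
      by_contra h2
      push_neg at h2
      exact hd (hvnone.trans (il_none w h2).symm)
    refine hnvw (tle_of_agree hpred hpred_self (by omega) (fun j hj => hdmin j (by omega)) ?_)
    intro a b ha hb
    have := hdmin (2 * htF S v.1 - 1) (by omega)
    rw [ha, hb] at this
    exact le_of_eq (Sum.inr.inj (Option.some.inj this))
  have hdw : d < 2 * htF S w.1 := by
    by_contra hcon
    push_neg at hcon
    have hwnone : (interleave S pred w)[d]? = none := il_none w hcon
    refine hnwv (tle_of_agree hpred hpred_self (by omega)
      (fun j hj => (hdmin j (by omega)).symm) ?_)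
    intro a b ha hb
    have := hdmin (2 * htF S w.1 - 1) (by omega)
    rw [hb, ha] at this
    exact le_of_eq (Sum.inr.inj (Option.some.inj this)).symm
  obtain ⟨x, hx⟩ : ∃ x, (interleave S pred v)[d]? = some x :=
    ⟨(interleave S pred v)[d]'(by rw [il_len]; exact hdv), List.getElem?_eq_getElem _⟩
  obtain ⟨y, hy⟩ : ∃ y, (interleave S pred w)[d]? = some y :=
    ⟨(interleave S pred w)[d]'(by rw [il_len]; exact hdw), List.getElem?_eq_getElem _⟩
  have hxy_ne : x ≠ y := fun h => hd (by rw [hx, hy, h])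
  obtain ⟨hmv, hagv, a1, b1, e_va, e_v'b, h_ab1⟩ := tle_agree hpred hv
  obtain ⟨hmw, hagw, a2, b2, e_wa, e_w'b, h_ab2⟩ := tle_agree hpred hw
  rcases (show d < 2 * htF S v.1 - 1 ∨ d = 2 * htF S v.1 - 1 by omega) with hv1' | hv1' <;>
    rcases (show d < 2 * htF S w.1 - 1 ∨ d = 2 * htF S w.1 - 1 by omega) with hw1' | hw1'
  · -- case (i): difference strictly before both last slots
    have hx' : (interleave S pred v')[d]? = some x := (hagv d hv1').trans hx
    have hy' : (interleave S pred w')[d]? = some y := (hagw d hw1').trans hy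
    have agρ : ∀ j, j < d → (interleave S pred v')[j]? = (interleave S pred w')[j]? :=
      fun j hj => ((hagv j (by omega)).trans (hdmin j hj)).trans (hagw j (by omega)).symm
    have hxy : sumRel S I x y ∨ sumRel S I y x := by
      obtain ⟨_, hfx⟩ := il_entry v d x hx
      obtain ⟨_, hfy⟩ := il_entry w d y hy
      rcases hfx with ⟨hex, rfl⟩ | ⟨hox, hjx, rfl⟩ <;>
        rcases hfy with ⟨hey, rfl⟩ | ⟨hoy, hjy, rfl⟩
      · have hne : pred v.1 (d / 2) ≠ pred w.1 (d / 2) := fun h => hxy_ne (by rw [h])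
        rcases S.lin_total (pred v.1 (d / 2)) (pred w.1 (d / 2)) with h | h
        · exact Or.inl ⟨h, hne⟩
        · exact Or.inr ⟨h, Ne.symm hne⟩
      · omega
      · omega
      · have hne : v.2 ⟨d / 2, hjx⟩ ≠ w.2 ⟨d / 2, hjy⟩ := fun h => hxy_ne (by rw [h])
        rcases lt_or_gt_of_ne hne with h | h
        · exact Or.inl h
        · exact Or.inr h
    rcases hxy with h | h
    · exact iff_of_true (Or.inr (lex_of_agree_of_rel agρ hx' hy' h))
        (Or.inr (lex_of_agree_of_rel hdmin hx hy h))
    · exact iff_of_false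
        (notLin _ _ v'w'_ne (lex_of_agree_of_rel (fun j hj => (agρ j hj).symm) hy' hx' h))
        (notLin _ _ vw_ne (lex_of_agree_of_rel (fun j hj => (hdmin j hj).symm) hy hx h))
  · -- case (iii): d = 2*hw - 1 < 2*hv - 1 : lin holds both unprimed and primed
    rw [← hw1'] at e_wa e_w'b
    obtain ⟨_, hfx⟩ := il_entry v d x hx
    rcases hfx with ⟨hex, _⟩ | ⟨hox, hjx, rfl⟩
    · omega
    have hy2 : y = Sum.inr a2 := Option.some.inj (hy.symm.trans e_wa)
    subst hy2
    have hab : v.2 ⟨d / 2, hjx⟩ < a2 := by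
      by_contra hcon
      push_neg at hcon
      refine hnwv (tle_of_agree hpred hpred_self (by omega)
        (fun j hj => (hdmin j (by omega)).symm) ?_)
      intro a0 b0 ha0 hb0
      rw [← hw1'] at ha0 hb0
      have h1 : a0 = a2 := Sum.inr.inj (Option.some.inj (ha0.symm.trans e_wa))
      have h2 : b0 = v.2 ⟨d / 2, hjx⟩ := Sum.inr.inj (Option.some.inj (hb0.symm.trans hx))
      rw [h1, h2]; exact hcon
    have hx' : (interleave S pred v')[d]? = some (Sum.inr (v.2 ⟨d / 2, hjx⟩)) :=
      (hagv d hv1').trans hx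
    have agp : ∀ j, j < d → (interleave S pred v')[j]? = (interleave S pred w')[j]? :=
      fun j hj => ((hagv j (by omega)).trans (hdmin j hj)).trans (hagw j (by omega)).symm
    exact iff_of_true
      (Or.inr (lex_of_agree_of_rel agp hx' e_w'b (show _ < _ from lt_of_lt_of_le hab h_ab2)))
      (Or.inr (lex_of_agree_of_rel hdmin hx hy (show _ < _ from hab)))
  · -- case (ii): d = 2*hv - 1 < 2*hw - 1 : lin fails both unprimed and primed
    rw [← hv1'] at e_va e_v'b
    obtain ⟨_, hfy⟩ := il_entry w d y hy
    rcases hfy with ⟨hey, _⟩ | ⟨hoy, hjy, rfl⟩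
    · omega
    have hx2 : x = Sum.inr a1 := Option.some.inj (hx.symm.trans e_va)
    subst hx2
    have hab : w.2 ⟨d / 2, hjy⟩ < a1 := by
      by_contra hcon
      push_neg at hcon
      refine hnvw (tle_of_agree hpred hpred_self (by omega)
        (fun j hj => hdmin j (by omega)) ?_)
      intro a0 b0 ha0 hb0
      rw [← hv1'] at ha0 hb0
      have h1 : a0 = a1 := Sum.inr.inj (Option.some.inj (ha0.symm.trans e_va))
      have h2 : b0 = w.2 ⟨d / 2, hjy⟩ := Sum.inr.inj (Option.some.inj (hb0.symm.trans hy))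
      rw [h1, h2]; exact hcon
    have hy' : (interleave S pred w')[d]? = some (Sum.inr (w.2 ⟨d / 2, hjy⟩)) :=
      (hagw d hw1').trans hy
    have agp : ∀ j, j < d → (interleave S pred w')[j]? = (interleave S pred v')[j]? :=
      fun j hj => ((hagw j (by omega)).trans (hdmin j hj).symm).trans (hagv j (by omega)).symm
    exact iff_of_false
      (notLin _ _ v'w'_ne
        (lex_of_agree_of_rel agp hy' e_v'b (show _ < _ from lt_of_lt_of_le hab h_ab1)))
      (notLin _ _ vw_ne
        (lex_of_agree_of_rel (fun j hj => (hdmin j hj).symm) hy hx (show _ < _ from hab)))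
  · -- impossible case: d = 2*hv - 1 = 2*hw - 1
    exfalso
    rw [← hv1'] at e_va
    rw [← hw1'] at e_wa
    have hx2 : x = Sum.inr a1 := Option.some.inj (hx.symm.trans e_va)
    have hy2 : y = Sum.inr a2 := Option.some.inj (hy.symm.trans e_wa)
    subst hx2; subst hy2
    rcases le_total a1 a2 with hab | hba
    · refine hnvw (tle_of_agree hpred hpred_self (by omega)
        (fun j hj => hdmin j (by omega)) ?_)
      intro a0 b0 ha0 hb0
      rw [← hv1'] at ha0 hb0
      have h1 : a0 = a1 := Sum.inr.inj (Option.some.inj (ha0.symm.trans e_va))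
      have h2 : b0 = a2 := Sum.inr.inj (Option.some.inj (hb0.symm.trans hy))
      rw [h1, h2]; exact hab
    · refine hnwv (tle_of_agree hpred hpred_self (by omega)
        (fun j hj => (hdmin j (by omega)).symm) ?_)
      intro a0 b0 ha0 hb0
      rw [← hw1'] at ha0 hb0
      have h1 : a0 = a2 := Sum.inr.inj (Option.some.inj (ha0.symm.trans e_wa))
      have h2 : b0 = a1 := Sum.inr.inj (Option.some.inj (hb0.symm.trans hx))
      rw [h1, h2]; exact hba

end TensorLin
/-- `S ⊗ I` with the relation `(s₁,t₁) ⊑ (s₂,t₂)` iff `s₁ ⊑_S s₂`,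
`t₁ ↾ (ht(s₁)−1) = t₂ ↾ (ht(s₁)−1)` and `t₁(ht(s₁)−1) ≤_I t₂(ht(s₁)−1)`, and with
the lexicographic comparison of interleaved sequences, is an ordered forest. -/
theorem stmt14 (I : Type) [Finite I] [LinearOrder I] (S : OForest α)
    (pred : α → ℕ → α)
    (hpred : ∀ s k, k < htF S s → S.tle (pred s k) s ∧ htF S (pred s k) = k + 1)
    (hpred_self : ∀ s, pred s (htF S s - 1) = s) :
    ∃ F : OForest (TCar S I),
      (∀ p q, F.tle p q ↔ tensorTle S p q) ∧
      (∀ p q, F.lin p q ↔ tensorLin S pred p q) := by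
  refine ⟨{
    tle := tensorTle S
    tle_refl := fun p => tensorTle_refl p
    tle_trans := fun p q r h1 h2 => tensorTle_trans hpred hpred_self h1 h2
    tle_antisymm := fun p q h1 h2 => tensorTle_antisymm hpred hpred_self h1 h2
    pred_chain := fun v x y hx hy => tensor_chain hpred hpred_self hx hy
    lin := tensorLin S pred
    lin_refl := fun p => Or.inl rfl
    lin_trans := ?_
    lin_antisymm := ?_
    lin_total := fun p q => tensor_lin_total hpred hpred_self p q
    tle_lin := fun p q h => tensor_tle_lin hpred hpred_self h
    lex_coh := fun v w v' w' h1 h2 h3 h4 => tensor_coh hpred hpred_self h1 h2 h3 h4 },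
    fun p q => Iff.rfl, fun p q => Iff.rfl⟩
  · rintro p q r (rfl | h1) h2
    · exact h2
    · rcases h2 with rfl | h2
      · exact Or.inr h1
      · exact Or.inr (lexTrans (r := sumRel S I) (fun _ _ _ ha hb => sumRel_trans ha hb) h1 h2)
  · rintro p q (rfl | h1) h2
    · rfl
    · rcases h2 with rfl | h2
      · rfl
      · exact absurd h2 (fun h2 => lexAsymm (r := sumRel S I) (fun _ _ ha hb => sumRel_asymm ha hb) h1 h2)
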